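/- Let m, n ≥ 2, let S := {(x,y) ∈ ℝᵐ × ℝⁿ : ‖x‖² + ‖y‖² = 1} be the unit sphere of ℝᵐ × ℝⁿ, and let U₁, U₂ be nonempty connected subsets of S, open in S, invariant under the componentwise O(m) × O(n)-action (i.e., (x,y) ∈ Uᵢ implies (γ₁x, γ₂y) ∈ Uᵢ for all γ₁ ∈ O(m), γ₂ ∈ O(n)), with U₁ ∩ U₂ = ∅ and with the closure of U₁ ∪ U₂ in S equal to S. Then there exists s₀ ∈ (0,1) such that, after possibly exchanging U₁ and U₂: U₁ ∪ {(x,0) ∈ S : ‖x‖ = 1} = {(x,y) ∈ S : ‖x‖ > s₀} and U₂ ∪ {(0,y) ∈ S : ‖y‖ = 1} = {(x,y) ∈ S : ‖x‖ < s₀}; in particular these two enlarged sets are open in S, connected, O(m) × O(n)-invariant and disjoint, and the boundary in S of each of them equals {(x,y) ∈ S : ‖x‖ = s₀}. -/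

import Mathlib

open Set

/-- The unit sphere of `ℝᵐ × ℝⁿ`, as a subset of the product. -/
def sphereSet (m n : ℕ) : Set (EuclideanSpace ℝ (Fin m) × EuclideanSpace ℝ (Fin n)) :=
  {p | ‖p.1‖ ^ 2 + ‖p.2‖ ^ 2 = 1}

/-- Invariance of a set under the componentwise `O(m) × O(n)`-action. -/
def isInvariantSet (m n : ℕ)
    (U : Set (EuclideanSpace ℝ (Fin m) × EuclideanSpace ℝ (Fin n))) : Prop :=
  ∀ p ∈ U, ∀ (γ₁ : EuclideanSpace ℝ (Fin m) ≃ₗᵢ[ℝ] EuclideanSpace ℝ (Fin m))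
    (γ₂ : EuclideanSpace ℝ (Fin n) ≃ₗᵢ[ℝ] EuclideanSpace ℝ (Fin n)),
    (γ₁ p.1, γ₂ p.2) ∈ U

/-- The conclusion of Lemma 5.2 for the ordered pair `(U₁, U₂)` and the level `s₀`:
the enlarged sets `Ũ₁ = U₁ ∪ (𝕊^{m-1} × {0})` and `Ũ₂ = U₂ ∪ ({0} × 𝕊^{n-1})` are
exactly `{p ∈ S : ‖p.1‖ > s₀}` and `{p ∈ S : ‖p.1‖ < s₀}`; in particular they are
open in `S`, connected, invariant and disjoint, and their boundary in `S` is
`{p ∈ S : ‖p.1‖ = s₀}`. -/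
def separationConclusion (m n : ℕ)
    (U₁ U₂ : Set (EuclideanSpace ℝ (Fin m) × EuclideanSpace ℝ (Fin n))) (s₀ : ℝ) : Prop :=
  (U₁ ∪ {p | ‖p.1‖ = 1 ∧ p.2 = 0} = {p ∈ sphereSet m n | s₀ < ‖p.1‖}) ∧
  (U₂ ∪ {p | ‖p.2‖ = 1 ∧ p.1 = 0} = {p ∈ sphereSet m n | ‖p.1‖ < s₀}) ∧
  IsOpen (Subtype.val ⁻¹' (U₁ ∪ {p | ‖p.1‖ = 1 ∧ p.2 = 0}) : Set ↥(sphereSet m n)) ∧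
  IsOpen (Subtype.val ⁻¹' (U₂ ∪ {p | ‖p.2‖ = 1 ∧ p.1 = 0}) : Set ↥(sphereSet m n)) ∧
  IsConnected (U₁ ∪ {p | ‖p.1‖ = 1 ∧ p.2 = 0}) ∧
  IsConnected (U₂ ∪ {p | ‖p.2‖ = 1 ∧ p.1 = 0}) ∧
  isInvariantSet m n (U₁ ∪ {p | ‖p.1‖ = 1 ∧ p.2 = 0}) ∧
  isInvariantSet m n (U₂ ∪ {p | ‖p.2‖ = 1 ∧ p.1 = 0}) ∧
  Disjoint (U₁ ∪ {p | ‖p.1‖ = 1 ∧ p.2 = 0}) (U₂ ∪ {p | ‖p.2‖ = 1 ∧ p.1 = 0}) ∧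
  frontier (Subtype.val ⁻¹' (U₁ ∪ {p | ‖p.1‖ = 1 ∧ p.2 = 0}) : Set ↥(sphereSet m n)) =
    Subtype.val ⁻¹' {p | ‖p.1‖ = s₀} ∧
  frontier (Subtype.val ⁻¹' (U₂ ∪ {p | ‖p.2‖ = 1 ∧ p.1 = 0}) : Set ↥(sphereSet m n)) =
    Subtype.val ⁻¹' {p | ‖p.1‖ = s₀}

lemma exists_iso {k : ℕ} (x y : EuclideanSpace ℝ (Fin k)) (h : ‖x‖ = ‖y‖) :
    ∃ γ : EuclideanSpace ℝ (Fin k) ≃ₗᵢ[ℝ] EuclideanSpace ℝ (Fin k), γ x = y :=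
  ⟨Submodule.reflection (ℝ ∙ (x - y))ᗮ, Submodule.reflection_sub h⟩

/-- the canonical unit vector -/
noncomputable def uvec (k : ℕ) : EuclideanSpace ℝ (Fin (k+1)) :=
  EuclideanSpace.single 0 (1:ℝ)

lemma norm_uvec (k : ℕ) : ‖uvec k‖ = 1 := by
  simp [uvec, EuclideanSpace.norm_single]

/-- second-component norm agrees on the sphere -/
lemma snd_norm_eq {m n : ℕ} {p q : EuclideanSpace ℝ (Fin m) × EuclideanSpace ℝ (Fin n)}
    (hp : p ∈ sphereSet m n) (hq : q ∈ sphereSet m n) (h : ‖p.1‖ = ‖q.1‖) :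
    ‖p.2‖ = ‖q.2‖ := by
  simp only [sphereSet, mem_setOf_eq] at hp hq
  have h2 : ‖p.2‖ ^ 2 = ‖q.2‖ ^ 2 := by rw [← h] at hq; linarith
  have := norm_nonneg p.2
  have := norm_nonneg q.2
  nlinarith

lemma orbit_lemma {m n : ℕ} {p q : EuclideanSpace ℝ (Fin m) × EuclideanSpace ℝ (Fin n)}
    (hp : p ∈ sphereSet m n) (hq : q ∈ sphereSet m n) (h : ‖p.1‖ = ‖q.1‖)
    {U : Set (EuclideanSpace ℝ (Fin m) × EuclideanSpace ℝ (Fin n))}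
    (hinv : isInvariantSet m n U) (hpU : p ∈ U) : q ∈ U := by
  obtain ⟨γ₁, hγ₁⟩ := exists_iso p.1 q.1 h
  obtain ⟨γ₂, hγ₂⟩ := exists_iso p.2 q.2 (snd_norm_eq hp hq h)
  have := hinv p hpU γ₁ γ₂
  rwa [hγ₁, hγ₂, Prod.mk.eta] at this

lemma sphere_norm_mem {m n : ℕ} {p : EuclideanSpace ℝ (Fin m) × EuclideanSpace ℝ (Fin n)}
    (hp : p ∈ sphereSet m n) : ‖p.1‖ ∈ Icc (0:ℝ) 1 := by
  simp only [sphereSet, mem_setOf_eq] at hp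
  have h1 := norm_nonneg p.1
  have h2 := sq_nonneg ‖p.2‖
  constructor
  · exact h1
  · nlinarith

section Curve

variable {m n : ℕ} (e₁ : EuclideanSpace ℝ (Fin m)) (e₂ : EuclideanSpace ℝ (Fin n))
  (he₁ : ‖e₁‖ = 1) (he₂ : ‖e₂‖ = 1)

noncomputable def curve (t : ℝ) : EuclideanSpace ℝ (Fin m) × EuclideanSpace ℝ (Fin n) :=
  (t • e₁, Real.sqrt (1 - t ^ 2) • e₂)

lemma curve_cont : Continuous (curve e₁ e₂) := by
  apply Continuous.prodMk
  · exact continuous_id.smul continuous_const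
  · exact ((Real.continuous_sqrt.comp (by continuity)).smul continuous_const)

include he₁ he₂ in
lemma curve_mem {t : ℝ} (ht : t ∈ Icc (0:ℝ) 1) : curve e₁ e₂ t ∈ sphereSet m n := by
  simp only [sphereSet, curve, mem_setOf_eq, norm_smul, Real.norm_eq_abs, he₁, he₂, mul_one]
  rw [abs_of_nonneg ht.1, abs_of_nonneg (Real.sqrt_nonneg _), Real.sq_sqrt (by nlinarith [ht.1, ht.2])]
  ring

include he₁ in
lemma curve_fst_norm {t : ℝ} (ht : 0 ≤ t) : ‖(curve e₁ e₂ t).1‖ = t := by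
  simp only [curve, norm_smul, Real.norm_eq_abs, he₁, mul_one, abs_of_nonneg ht]

end Curve

section Band

variable {m n : ℕ}

/-- The map used to parameterize bands of the sphere. -/
noncomputable def bandMap (z : EuclideanSpace ℝ (Fin m) × EuclideanSpace ℝ (Fin n) × ℝ) :
    EuclideanSpace ℝ (Fin m) × EuclideanSpace ℝ (Fin n) :=
  (z.2.2 • z.1, Real.sqrt (1 - z.2.2 ^ 2) • z.2.1)

lemma bandMap_cont : Continuous (bandMap (m := m) (n := n)) := by
  apply Continuous.prodMk
  · exact (continuous_snd.comp continuous_snd).smul continuous_fst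
  · exact ((Real.continuous_sqrt.comp (continuous_const.sub ((continuous_snd.comp continuous_snd).pow 2))).smul (continuous_fst.comp continuous_snd))

lemma band_eq (e₁ : EuclideanSpace ℝ (Fin m)) (e₂ : EuclideanSpace ℝ (Fin n))
    (he₁ : ‖e₁‖ = 1) (he₂ : ‖e₂‖ = 1) (I : Set ℝ) (hI : I ⊆ Icc 0 1) :
    bandMap '' (Metric.sphere (0 : EuclideanSpace ℝ (Fin m)) 1 ×ˢ
      Metric.sphere (0 : EuclideanSpace ℝ (Fin n)) 1 ×ˢ I) =
      {p | p ∈ sphereSet m n ∧ ‖p.1‖ ∈ I} := by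
  classical
  ext p
  constructor
  · rintro ⟨⟨u, v, t⟩, ⟨hu, hv, ht⟩, rfl⟩
    rw [mem_sphere_zero_iff_norm] at hu hv
    obtain ⟨ht0, ht1⟩ := hI ht
    have hb : ‖(bandMap (u, v, t)).1‖ = t := by
      simp [bandMap, norm_smul, hu, abs_of_nonneg ht0]
    refine ⟨?_, by rw [hb]; exact ht⟩
    simp only [sphereSet, bandMap, mem_setOf_eq, norm_smul, Real.norm_eq_abs, hu, hv, mul_one]
    rw [abs_of_nonneg ht0, abs_of_nonneg (Real.sqrt_nonneg _), Real.sq_sqrt (by nlinarith)]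
    ring
  · rintro ⟨hpS, hpI⟩
    have hsph := hpS
    simp only [sphereSet, mem_setOf_eq] at hsph
    set t := ‖p.1‖ with htdef
    have ht0 : 0 ≤ t := norm_nonneg _
    have hsq : Real.sqrt (1 - t ^ 2) = ‖p.2‖ := by
      rw [show (1 : ℝ) - t ^ 2 = ‖p.2‖ ^ 2 by rw [htdef]; linarith, Real.sqrt_sq (norm_nonneg _)]
    obtain ⟨u, hu, hut⟩ : ∃ u : EuclideanSpace ℝ (Fin m), ‖u‖ = 1 ∧ t • u = p.1 := by
      by_cases hx : p.1 = 0
      · exact ⟨e₁, he₁, by rw [show t = 0 from by rw [htdef, hx, norm_zero], zero_smul, hx]⟩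
      · refine ⟨‖p.1‖⁻¹ • p.1, ?_, ?_⟩
        · rw [norm_smul, norm_inv, Real.norm_eq_abs, abs_of_nonneg (norm_nonneg _),
            inv_mul_cancel₀ (norm_ne_zero_iff.mpr hx)]
        · rw [smul_smul, htdef, mul_inv_cancel₀ (norm_ne_zero_iff.mpr hx), one_smul]
    obtain ⟨v, hv, hvt⟩ : ∃ v : EuclideanSpace ℝ (Fin n), ‖v‖ = 1 ∧ ‖p.2‖ • v = p.2 := by
      by_cases hy : p.2 = 0
      · exact ⟨e₂, he₂, by rw [hy, norm_zero, zero_smul]⟩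
      · refine ⟨‖p.2‖⁻¹ • p.2, ?_, ?_⟩
        · rw [norm_smul, norm_inv, Real.norm_eq_abs, abs_of_nonneg (norm_nonneg _),
            inv_mul_cancel₀ (norm_ne_zero_iff.mpr hy)]
        · rw [smul_smul, mul_inv_cancel₀ (norm_ne_zero_iff.mpr hy), one_smul]
    refine ⟨(u, v, t), ⟨mem_sphere_zero_iff_norm.mpr hu, mem_sphere_zero_iff_norm.mpr hv, hpI⟩, ?_⟩
    show (t • u, Real.sqrt (1 - t ^ 2) • v) = p
    rw [hsq]
    exact Prod.ext hut hvt

lemma rank_gt_one {k : ℕ} (hk : 2 ≤ k) : 1 < Module.rank ℝ (EuclideanSpace ℝ (Fin k)) := by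
  have h := finrank_euclideanSpace_fin (𝕜 := ℝ) (n := k)
  have h2 := Module.finrank_eq_rank ℝ (EuclideanSpace ℝ (Fin k))
  rw [h] at h2
  rw [← h2]
  exact_mod_cast hk

lemma band_connected (hm : 2 ≤ m) (hn : 2 ≤ n)
    (e₁ : EuclideanSpace ℝ (Fin m)) (e₂ : EuclideanSpace ℝ (Fin n))
    (he₁ : ‖e₁‖ = 1) (he₂ : ‖e₂‖ = 1) (I : Set ℝ) (hI : I ⊆ Icc 0 1)
    (hIconn : IsConnected I) :
    IsConnected {p | p ∈ sphereSet m n ∧ ‖p.1‖ ∈ I} := by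
  rw [← band_eq e₁ e₂ he₁ he₂ I hI]
  apply IsConnected.image _ _ (bandMap_cont.continuousOn)
  exact (isConnected_sphere (rank_gt_one hm) 0 zero_le_one).prod
    ((isConnected_sphere (rank_gt_one hn) 0 zero_le_one).prod hIconn)

end Band

section Approach
open Filter Topology

variable {m n : ℕ}

lemma mem_closure_bands {q : EuclideanSpace ℝ (Fin m) × EuclideanSpace ℝ (Fin n)} {s₀ : ℝ}
    (hq : q ∈ sphereSet m n) (hnq : ‖q.1‖ = s₀) (h0 : 0 < s₀) (h1 : s₀ < 1) :
    q ∈ closure {p | p ∈ sphereSet m n ∧ s₀ < ‖p.1‖} ∧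
    q ∈ closure {p | p ∈ sphereSet m n ∧ ‖p.1‖ < s₀} := by
  set f : ℝ → EuclideanSpace ℝ (Fin m) × EuclideanSpace ℝ (Fin n) :=
    fun t => ((t / s₀) • q.1, (Real.sqrt (1 - t ^ 2) / Real.sqrt (1 - s₀ ^ 2)) • q.2) with hf
  have hsphq : ‖q.1‖ ^ 2 + ‖q.2‖ ^ 2 = 1 := hq
  have hq2 : ‖q.2‖ ^ 2 = 1 - s₀ ^ 2 := by rw [hnq] at hsphq; linarith
  have hcont : Continuous f := by
    apply Continuous.prodMk
    · exact (continuous_id.div_const s₀).smul continuous_const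
    · exact ((Real.continuous_sqrt.comp
        (continuous_const.sub (continuous_id.pow 2))).div_const _).smul continuous_const
  have hfs₀ : f s₀ = q := by
    simp only [hf]
    rw [div_self h0.ne', one_smul,
      div_self (Real.sqrt_pos.mpr (by nlinarith)).ne', one_smul]
  have hkey : ∀ t ∈ Ioo (0:ℝ) 1, f t ∈ sphereSet m n ∧ ‖(f t).1‖ = t := by
    intro t ⟨ht0, ht1⟩
    have hn1 : ‖(f t).1‖ = t := by
      simp only [hf, norm_smul, Real.norm_eq_abs, hnq,
        abs_of_nonneg (by positivity : (0:ℝ) ≤ t / s₀)]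
      field_simp
    refine ⟨?_, hn1⟩
    simp only [sphereSet, mem_setOf_eq]
    rw [hn1]
    simp only [hf, norm_smul, Real.norm_eq_abs, mul_pow, sq_abs, hq2, div_pow,
      Real.sq_sqrt (by nlinarith : (0:ℝ) ≤ 1 - t ^ 2),
      Real.sq_sqrt (by nlinarith : (0:ℝ) ≤ 1 - s₀ ^ 2)]
    rw [div_mul_cancel₀ _ (ne_of_gt (by nlinarith : (0:ℝ) < 1 - s₀ ^ 2))]
    ring
  constructor
  · have htend : Tendsto f (𝓝[>] s₀) (𝓝 q) := by
      rw [← hfs₀]; exact (hcont.tendsto s₀).mono_left nhdsWithin_le_nhds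
    apply mem_closure_of_tendsto htend
    filter_upwards [Ioo_mem_nhdsGT_of_mem ⟨le_refl s₀, h1⟩] with t ht
    obtain ⟨hmem, hnorm⟩ := hkey t ⟨h0.trans ht.1, ht.2⟩
    exact ⟨hmem, by rw [hnorm]; exact ht.1⟩
  · have htend : Tendsto f (𝓝[<] s₀) (𝓝 q) := by
      rw [← hfs₀]; exact (hcont.tendsto s₀).mono_left nhdsWithin_le_nhds
    apply mem_closure_of_tendsto htend
    filter_upwards [Ioo_mem_nhdsLT_of_mem ⟨h0, le_refl s₀⟩] with t ht
    obtain ⟨hmem, hnorm⟩ := hkey t ⟨ht.1, ht.2.trans h1⟩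
    exact ⟨hmem, by rw [hnorm]; exact ht.2⟩

end Approach

/-- relatively open in [0,1] -/
def RelOpen01 (A : Set ℝ) : Prop :=
  ∀ s ∈ A, ∃ ε > 0, Ioo (s - ε) (s + ε) ∩ Icc 0 1 ⊆ A

lemma lemmaR {A₁ A₂ : Set ℝ} (h₁ : A₁ ⊆ Icc 0 1) (h₂ : A₂ ⊆ Icc 0 1)
    (hne₁ : A₁.Nonempty) (hne₂ : A₂.Nonempty)
    (hoc₁ : A₁.OrdConnected) (hoc₂ : A₂.OrdConnected)
    (hd : Disjoint A₁ A₂)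
    (ho₁ : RelOpen01 A₁) (ho₂ : RelOpen01 A₂)
    (hdense : Icc (0:ℝ) 1 ⊆ closure A₁ ∪ closure A₂)
    (horder : ∃ a₁ ∈ A₁, ∃ a₂ ∈ A₂, a₂ < a₁) :
    ∃ s₀ ∈ Ioo (0:ℝ) 1, Ioo s₀ 1 ⊆ A₁ ∧ A₁ ⊆ Ioc s₀ 1 ∧ Ioo 0 s₀ ⊆ A₂ ∧ A₂ ⊆ Ico 0 s₀ := by
  obtain ⟨a₁, ha₁, a₂, ha₂, hlt⟩ := horder
  have hbdd : BddAbove A₂ := ⟨1, fun x hx => (h₂ hx).2⟩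
  set s₀ := sSup A₂ with hs₀
  have hle : ∀ a ∈ A₂, a ≤ s₀ := fun a ha => le_csSup hbdd ha
  have hexgt : ∀ t, t < s₀ → ∃ a ∈ A₂, t < a := fun t ht => exists_lt_of_lt_csSup hne₂ ht
  -- s₀ < a₁
  have hs₀a₁ : s₀ < a₁ := by
    rcases lt_trichotomy s₀ a₁ with h | h | h
    · exact h
    · -- a₁ = sSup A₂ : contradiction via openness of A₁
      exfalso
      obtain ⟨ε, hε, hsub⟩ := ho₁ a₁ ha₁
      obtain ⟨a, ha, hgt⟩ := hexgt (max a₂ (a₁ - ε/2)) (by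
        rw [← h]
        exact max_lt (by rw [h]; exact hlt) (by linarith))
      have haA₁ : a ∈ A₁ := by
        apply hsub
        have h1 : a ≤ s₀ := hle a ha
        have h2 : a₁ - ε/2 < a := lt_of_le_of_lt (le_max_right _ _) hgt
        constructor
        · constructor <;> [linarith; linarith [h ▸ h1]]
        · exact h₂ ha
      exact (hd.ne_of_mem haA₁ ha rfl).elim
    · -- a₁ < s₀ : then a₁ between a₂ and some a ∈ A₂
      exfalso
      obtain ⟨a, ha, hgt⟩ := hexgt a₁ h
      have : a₁ ∈ A₂ := hoc₂.out ha₂ ha ⟨hlt.le, hgt.le⟩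
      exact (hd.ne_of_mem ha₁ this rfl).elim
  have ha₁1 : a₁ ≤ 1 := (h₁ ha₁).2
  have hs₀lt1 : s₀ < 1 := lt_of_lt_of_le hs₀a₁ ha₁1
  have hs₀nA₂ : s₀ ∉ A₂ := by
    intro hmem
    obtain ⟨ε, hε, hsub⟩ := ho₂ s₀ hmem
    have h0 : 0 ≤ s₀ := (h₂ hmem).1
    set t := min (s₀ + ε/2) ((s₀ + 1)/2) with ht
    have htA₂ : t ∈ A₂ := by
      apply hsub
      constructor
      · constructor
        · have : s₀ < t := lt_min (by linarith) (by linarith)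
          linarith
        · exact lt_of_le_of_lt (min_le_left _ _) (by linarith)
      · refine ⟨le_trans h0 (le_of_lt (lt_min (by linarith) (by linarith))), ?_⟩
        exact le_trans (min_le_right _ _) (by linarith)
    have : t ≤ s₀ := hle t htA₂
    have : s₀ < t := lt_min (by linarith) (by linarith)
    linarith
  have hs₀pos : 0 < s₀ := by
    have h0 : 0 ≤ s₀ := le_trans (h₂ ha₂).1 (hle a₂ ha₂)
    rcases h0.lt_or_eq with h | h
    · exact h
    · -- s₀ = 0, so A₂ = {0}... but then 0 ∈ A₂ contradicting s₀ ∉ A₂? a₂ ≤ s₀ = 0 and a₂ ≥ 0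
      exfalso
      have : a₂ = 0 := le_antisymm (h ▸ hle a₂ ha₂) (h₂ ha₂).1
      exact hs₀nA₂ (h ▸ this ▸ ha₂)
  have hA₂sub : A₂ ⊆ Ico 0 s₀ := fun a ha =>
    ⟨(h₂ ha).1, lt_of_le_of_ne (hle a ha) (fun he => hs₀nA₂ (he ▸ ha))⟩
  have hclA₂ : closure A₂ ⊆ Icc 0 s₀ := closure_minimal (fun a ha => ⟨(hA₂sub ha).1, (hA₂sub ha).2.le⟩) isClosed_Icc
  have hA₁sub : A₁ ⊆ Ioc s₀ 1 := by
    intro a ha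
    refine ⟨?_, (h₁ ha).2⟩
    by_contra hle'
    push_neg at hle'
    rcases hle'.lt_or_eq with h | h
    · -- a < s₀
      obtain ⟨b, hb, hab⟩ := hexgt a h
      rcases lt_trichotomy a a₂ with h' | h' | h'
      · have : a₂ ∈ A₁ := hoc₁.out ha ha₁ ⟨h'.le, hlt.le⟩
        exact (hd.ne_of_mem this ha₂ rfl).elim
      · exact (hd.ne_of_mem ha ha₂ h').elim
      · have : a ∈ A₂ := hoc₂.out ha₂ hb ⟨h'.le, hab.le⟩
        exact (hd.ne_of_mem ha this rfl).elim
    · -- a = s₀ ∈ A₁, contradiction with sup from below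
      obtain ⟨ε, hε, hsub⟩ := ho₁ a ha
      obtain ⟨b, hb, hgt⟩ := hexgt (max a₂ (s₀ - ε/2))
        (max_lt (hA₂sub ha₂).2 (by linarith))
      have hbA₁ : b ∈ A₁ := by
        apply hsub
        have h1 : b ≤ s₀ := hle b hb
        have h2 : s₀ - ε/2 < b := lt_of_le_of_lt (le_max_right _ _) hgt
        exact ⟨⟨by linarith [h ▸ h1], by linarith [h ▸ h1]⟩, h₂ hb⟩
      exact (hd.ne_of_mem hbA₁ hb rfl).elim
  have hclA₁ : closure A₁ ⊆ Icc s₀ 1 := closure_minimal (fun a ha => ⟨(hA₁sub ha).1.le, (hA₁sub ha).2⟩) isClosed_Icc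
  refine ⟨s₀, ⟨hs₀pos, hs₀lt1⟩, ?_, hA₁sub, ?_, hA₂sub⟩
  · -- Ioo s₀ 1 ⊆ A₁
    intro s hs
    by_cases h1 : ∃ a ∈ A₁, s ≤ a
    · by_cases h2 : ∃ a ∈ A₁, a ≤ s
      · obtain ⟨a, ha, has⟩ := h2
        obtain ⟨a', ha', hsa'⟩ := h1
        exact hoc₁.out ha ha' ⟨has, hsa'⟩
      · push_neg at h2
        -- every a ∈ A₁ has s < a, so closure A₁ ⊆ [s, 1]
        have hcl : closure A₁ ⊆ Icc s 1 :=
          closure_minimal (fun a ha => ⟨(h2 a ha).le, (h₁ ha).2⟩) isClosed_Icc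
        set t := (s₀ + s)/2 with htd
        have ht : t ∈ Icc (0:ℝ) 1 := ⟨by linarith [hs.1, hs₀pos], by linarith [hs.2, hs₀lt1]⟩
        rcases hdense ht with hc | hc
        · exact absurd ((hcl hc).1) (by push_neg; linarith [hs.1])
        · exact absurd ((hclA₂ hc).2) (by push_neg; linarith [hs.1])
    · push_neg at h1
      have hcl : closure A₁ ⊆ Icc s₀ s :=
        closure_minimal (fun a ha => ⟨(hA₁sub ha).1.le, (h1 a ha).le⟩) isClosed_Icc
      set t := (s + 1)/2 with htd
      have ht : t ∈ Icc (0:ℝ) 1 := ⟨by linarith [hs.1, hs₀pos], by linarith [hs.2]⟩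
      rcases hdense ht with hc | hc
      · exact absurd ((hcl hc).2) (by push_neg; linarith [hs.2])
      · exact absurd ((hclA₂ hc).2) (by push_neg; linarith [hs.1, hs.2])
  · -- Ioo 0 s₀ ⊆ A₂
    intro s hs
    obtain ⟨b, hb, hsb⟩ := hexgt s hs.2
    by_cases h2 : ∃ a ∈ A₂, a ≤ s
    · obtain ⟨a, ha, has⟩ := h2
      exact hoc₂.out ha hb ⟨has, hsb.le⟩
    · push_neg at h2
      have hcl : closure A₂ ⊆ Icc s s₀ :=
        closure_minimal (fun a ha => ⟨(h2 a ha).le, (hle a ha)⟩) isClosed_Icc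
      set t := s/2 with htd
      have ht : t ∈ Icc (0:ℝ) 1 := ⟨by linarith [hs.1], by linarith [hs.2, hs₀lt1]⟩
      rcases hdense ht with hc | hc
      · exact absurd ((hclA₁ hc).1) (by push_neg; linarith [hs.1, hs.2, hs₀lt1])
      · exact absurd ((hcl hc).1) (by push_neg; linarith [hs.1])

private lemma aux_main (m n : ℕ) (hm : 2 ≤ m) (hn : 2 ≤ n)
    (U₁ U₂ : Set (EuclideanSpace ℝ (Fin m) × EuclideanSpace ℝ (Fin n)))
    (hU₁S : U₁ ⊆ sphereSet m n) (hU₂S : U₂ ⊆ sphereSet m n)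
    (hU₁conn : IsConnected U₁) (hU₂conn : IsConnected U₂)
    (hU₁open : IsOpen (Subtype.val ⁻¹' U₁ : Set ↥(sphereSet m n)))
    (hU₂open : IsOpen (Subtype.val ⁻¹' U₂ : Set ↥(sphereSet m n)))
    (hU₁inv : isInvariantSet m n U₁) (hU₂inv : isInvariantSet m n U₂)
    (hdisj : Disjoint U₁ U₂)
    (hdense : sphereSet m n ⊆ closure (U₁ ∪ U₂))
    (horder : ∃ p ∈ U₁, ∃ q ∈ U₂, ‖q.1‖ < ‖p.1‖) :
    ∃ s₀ ∈ Ioo (0:ℝ) 1, separationConclusion m n U₁ U₂ s₀ := by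
  have hm0 : 0 < m := by omega
  have hn0 : 0 < n := by omega
  set e₁ : EuclideanSpace ℝ (Fin m) := EuclideanSpace.single (⟨0, hm0⟩ : Fin m) (1:ℝ) with he₁def
  set e₂ : EuclideanSpace ℝ (Fin n) := EuclideanSpace.single (⟨0, hn0⟩ : Fin n) (1:ℝ) with he₂def
  have he₁ : ‖e₁‖ = 1 := by simp [he₁def, EuclideanSpace.norm_single]
  have he₂ : ‖e₂‖ = 1 := by simp [he₂def, EuclideanSpace.norm_single]
  -- membership criterion via the curve
  have hmemiff : ∀ (U : Set (EuclideanSpace ℝ (Fin m) × EuclideanSpace ℝ (Fin n))),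
      U ⊆ sphereSet m n → isInvariantSet m n U →
      ∀ p ∈ sphereSet m n, (p ∈ U ↔ curve e₁ e₂ ‖p.1‖ ∈ U) := by
    intro U hUS hUinv p hpS
    have hcs : curve e₁ e₂ ‖p.1‖ ∈ sphereSet m n := curve_mem e₁ e₂ he₁ he₂ (sphere_norm_mem hpS)
    have hnc : ‖(curve e₁ e₂ ‖p.1‖).1‖ = ‖p.1‖ := curve_fst_norm e₁ e₂ he₁ (norm_nonneg _)
    exact ⟨fun h => orbit_lemma hpS hcs hnc.symm hUinv h,
           fun h => orbit_lemma hcs hpS hnc hUinv h⟩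
  have himg : ∀ (U : Set (EuclideanSpace ℝ (Fin m) × EuclideanSpace ℝ (Fin n))),
      U ⊆ sphereSet m n → isInvariantSet m n U →
      {t | t ∈ Icc (0:ℝ) 1 ∧ curve e₁ e₂ t ∈ U} = (fun p => ‖p.1‖) '' U := by
    intro U hUS hUinv
    ext t
    constructor
    · rintro ⟨htI, htU⟩
      exact ⟨curve e₁ e₂ t, htU, curve_fst_norm e₁ e₂ he₁ htI.1⟩
    · rintro ⟨p, hpU, rfl⟩
      exact ⟨sphere_norm_mem (hUS hpU), (hmemiff U hUS hUinv p (hUS hpU)).mp hpU⟩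
  have hrelopen : ∀ (U : Set (EuclideanSpace ℝ (Fin m) × EuclideanSpace ℝ (Fin n))),
      IsOpen (Subtype.val ⁻¹' U : Set ↥(sphereSet m n)) →
      RelOpen01 {t | t ∈ Icc (0:ℝ) 1 ∧ curve e₁ e₂ t ∈ U} := by
    intro U hUopen s ⟨hsI, hsU⟩
    obtain ⟨V, hVopen, hVU⟩ := isOpen_induced_iff.mp hUopen
    have hsV : curve e₁ e₂ s ∈ V := by
      have h2 : (⟨curve e₁ e₂ s, curve_mem _ _ he₁ he₂ hsI⟩ : ↥(sphereSet m n))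
          ∈ Subtype.val ⁻¹' U := hsU
      rw [← hVU] at h2; exact h2
    obtain ⟨ε, hε, hball⟩ :=
      Metric.isOpen_iff.mp (hVopen.preimage (curve_cont e₁ e₂)) s hsV
    refine ⟨ε, hε, fun t ⟨htoo, htI⟩ => ⟨htI, ?_⟩⟩
    have hV : curve e₁ e₂ t ∈ V := hball (by rw [Real.ball_eq_Ioo]; exact htoo)
    have h2 : (⟨curve e₁ e₂ t, curve_mem _ _ he₁ he₂ htI⟩ : ↥(sphereSet m n))
        ∈ Subtype.val ⁻¹' V := hV
    rw [hVU] at h2; exact h2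
  set A₁ := {t | t ∈ Icc (0:ℝ) 1 ∧ curve e₁ e₂ t ∈ U₁} with hA₁def
  set A₂ := {t | t ∈ Icc (0:ℝ) 1 ∧ curve e₁ e₂ t ∈ U₂} with hA₂def
  have hA₁img := himg U₁ hU₁S hU₁inv
  have hA₂img := himg U₂ hU₂S hU₂inv
  obtain ⟨s₀, hs₀, hIoo1, hsub1, hIoo2, hsub2⟩ :
      ∃ s₀ ∈ Ioo (0:ℝ) 1, Ioo s₀ 1 ⊆ A₁ ∧ A₁ ⊆ Ioc s₀ 1 ∧ Ioo 0 s₀ ⊆ A₂ ∧ A₂ ⊆ Ico 0 s₀ := by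
    apply lemmaR (fun t ht => ht.1) (fun t ht => ht.1)
    · rw [hA₁def, hA₁img]; exact hU₁conn.nonempty.image _
    · rw [hA₂def, hA₂img]; exact hU₂conn.nonempty.image _
    · rw [hA₁def, hA₁img]
      exact (hU₁conn.image _ (continuous_fst.norm.continuousOn)).isPreconnected.ordConnected
    · rw [hA₂def, hA₂img]
      exact (hU₂conn.image _ (continuous_fst.norm.continuousOn)).isPreconnected.ordConnected
    · rw [Set.disjoint_left]
      rintro t ⟨_, ht1⟩ ⟨_, ht2⟩
      exact hdisj.ne_of_mem ht1 ht2 rfl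
    · exact hrelopen U₁ hU₁open
    · exact hrelopen U₂ hU₂open
    · intro s hs
      have h1 : curve e₁ e₂ s ∈ closure (U₁ ∪ U₂) := hdense (curve_mem _ _ he₁ he₂ hs)
      have h2 : s ∈ (fun p => ‖p.1‖) '' closure (U₁ ∪ U₂) :=
        ⟨curve e₁ e₂ s, h1, curve_fst_norm e₁ e₂ he₁ hs.1⟩
      have h3 : s ∈ closure ((fun p => ‖p.1‖) '' (U₁ ∪ U₂)) :=
        image_closure_subset_closure_image continuous_fst.norm h2
      rw [image_union, ← hA₁img, ← hA₂img, ← hA₁def, ← hA₂def, closure_union] at h3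
      exact h3
    · obtain ⟨p, hp, q, hq, hlt⟩ := horder
      refine ⟨‖p.1‖, ?_, ‖q.1‖, ?_, hlt⟩
      · rw [hA₁def, hA₁img]; exact ⟨p, hp, rfl⟩
      · rw [hA₂def, hA₂img]; exact ⟨q, hq, rfl⟩
  -- memberships
  have hU₁norm : ∀ p ∈ U₁, ‖p.1‖ ∈ Ioc s₀ 1 := fun p hp =>
    hsub1 (by rw [hA₁def, hA₁img]; exact ⟨p, hp, rfl⟩)
  have hU₂norm : ∀ p ∈ U₂, ‖p.1‖ ∈ Ico 0 s₀ := fun p hp =>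
    hsub2 (by rw [hA₂def, hA₂img]; exact ⟨p, hp, rfl⟩)
  have hmem1 : ∀ p ∈ sphereSet m n, ‖p.1‖ ∈ Ioo s₀ 1 → p ∈ U₁ := fun p hpS h =>
    (hmemiff U₁ hU₁S hU₁inv p hpS).mpr (hIoo1 h).2
  have hmem2 : ∀ p ∈ sphereSet m n, ‖p.1‖ ∈ Ioo 0 s₀ → p ∈ U₂ := fun p hpS h =>
    (hmemiff U₂ hU₂S hU₂inv p hpS).mpr (hIoo2 h).2
  -- the two set identities
  have hT₁ : U₁ ∪ {p | ‖p.1‖ = 1 ∧ p.2 = 0} = {p | p ∈ sphereSet m n ∧ s₀ < ‖p.1‖} := by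
    ext p
    constructor
    · rintro (hp | ⟨hp1, hp2⟩)
      · exact ⟨hU₁S hp, (hU₁norm p hp).1⟩
      · refine ⟨?_, by rw [hp1]; exact hs₀.2⟩
        show ‖p.1‖ ^ 2 + ‖p.2‖ ^ 2 = 1
        rw [hp1, hp2]; simp
    · rintro ⟨hpS, hps⟩
      rcases eq_or_lt_of_le (sphere_norm_mem hpS).2 with h1 | h1
      · right
        refine ⟨h1, ?_⟩
        have : ‖p.2‖ ^ 2 = 0 := by
          have := hpS; simp only [sphereSet, mem_setOf_eq] at this; rw [h1] at this; linarith
        exact norm_eq_zero.mp (by nlinarith [norm_nonneg p.2])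
      · exact Or.inl (hmem1 p hpS ⟨hps, h1⟩)
  have hT₂ : U₂ ∪ {p | ‖p.2‖ = 1 ∧ p.1 = 0} = {p | p ∈ sphereSet m n ∧ ‖p.1‖ < s₀} := by
    ext p
    constructor
    · rintro (hp | ⟨hp2, hp1⟩)
      · exact ⟨hU₂S hp, (hU₂norm p hp).2⟩
      · refine ⟨?_, by rw [hp1]; simpa using hs₀.1⟩
        show ‖p.1‖ ^ 2 + ‖p.2‖ ^ 2 = 1
        rw [hp1, hp2]; simp
    · rintro ⟨hpS, hps⟩
      rcases (norm_nonneg p.1).lt_or_eq with h1 | h1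
      · exact Or.inl (hmem2 p hpS ⟨h1, hps⟩)
      · right
        have hp1 : p.1 = 0 := norm_eq_zero.mp h1.symm
        refine ⟨?_, hp1⟩
        have := hpS; simp only [sphereSet, mem_setOf_eq] at this
        rw [← h1] at this
        nlinarith [norm_nonneg p.2]
  refine ⟨s₀, hs₀, ?_⟩
  unfold separationConclusion
  rw [hT₁, hT₂]
  -- abbreviations
  have hW₁sub : {p : EuclideanSpace ℝ (Fin m) × EuclideanSpace ℝ (Fin n) |
      p ∈ sphereSet m n ∧ s₀ < ‖p.1‖} ⊆ sphereSet m n := fun p hp => hp.1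
  have hW₂sub : {p : EuclideanSpace ℝ (Fin m) × EuclideanSpace ℝ (Fin n) |
      p ∈ sphereSet m n ∧ ‖p.1‖ < s₀} ⊆ sphereSet m n := fun p hp => hp.1
  have hopen1 : IsOpen (Subtype.val ⁻¹' {p | p ∈ sphereSet m n ∧ s₀ < ‖p.1‖} :
      Set ↥(sphereSet m n)) := by
    have he : (Subtype.val ⁻¹' {p | p ∈ sphereSet m n ∧ s₀ < ‖p.1‖} : Set ↥(sphereSet m n))
        = Subtype.val ⁻¹' {p | s₀ < ‖p.1‖} := by
      ext x
      simp only [mem_preimage, mem_setOf_eq, x.2, true_and]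
    rw [he]
    exact (isOpen_lt continuous_const continuous_fst.norm).preimage continuous_subtype_val
  have hopen2 : IsOpen (Subtype.val ⁻¹' {p | p ∈ sphereSet m n ∧ ‖p.1‖ < s₀} :
      Set ↥(sphereSet m n)) := by
    have he : (Subtype.val ⁻¹' {p | p ∈ sphereSet m n ∧ ‖p.1‖ < s₀} : Set ↥(sphereSet m n))
        = Subtype.val ⁻¹' {p | ‖p.1‖ < s₀} := by
      ext x
      simp only [mem_preimage, mem_setOf_eq, x.2, true_and]
    rw [he]
    exact (isOpen_lt continuous_fst.norm continuous_const).preimage continuous_subtype_val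
  have hconn1 : IsConnected {p | p ∈ sphereSet m n ∧ s₀ < ‖p.1‖} := by
    have he : {p | p ∈ sphereSet m n ∧ s₀ < ‖p.1‖}
        = {p | p ∈ sphereSet m n ∧ ‖p.1‖ ∈ Ioc s₀ 1} := by
      ext p
      exact ⟨fun ⟨h, h2⟩ => ⟨h, h2, (sphere_norm_mem h).2⟩, fun ⟨h, h2⟩ => ⟨h, h2.1⟩⟩
    rw [he]
    exact band_connected hm hn e₁ e₂ he₁ he₂ _ (fun t ht => ⟨hs₀.1.le.trans ht.1.le, ht.2⟩)
      ⟨nonempty_Ioc.mpr hs₀.2, isPreconnected_Ioc⟩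
  have hconn2 : IsConnected {p | p ∈ sphereSet m n ∧ ‖p.1‖ < s₀} := by
    have he : {p | p ∈ sphereSet m n ∧ ‖p.1‖ < s₀}
        = {p | p ∈ sphereSet m n ∧ ‖p.1‖ ∈ Ico 0 s₀} := by
      ext p
      exact ⟨fun ⟨h, h2⟩ => ⟨h, norm_nonneg _, h2⟩, fun ⟨h, h2⟩ => ⟨h, h2.2⟩⟩
    rw [he]
    exact band_connected hm hn e₁ e₂ he₁ he₂ _ (fun t ht => ⟨ht.1, ht.2.le.trans hs₀.2.le⟩)
      ⟨nonempty_Ico.mpr hs₀.1, isPreconnected_Ico⟩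
  have hinv1 : isInvariantSet m n {p | p ∈ sphereSet m n ∧ s₀ < ‖p.1‖} := by
    rintro p ⟨hpS, hps⟩ γ₁ γ₂
    refine ⟨?_, ?_⟩
    · show ‖γ₁ p.1‖ ^ 2 + ‖γ₂ p.2‖ ^ 2 = 1
      rw [γ₁.norm_map, γ₂.norm_map]; exact hpS
    · show s₀ < ‖γ₁ p.1‖
      rw [γ₁.norm_map]; exact hps
  have hinv2 : isInvariantSet m n {p | p ∈ sphereSet m n ∧ ‖p.1‖ < s₀} := by
    rintro p ⟨hpS, hps⟩ γ₁ γ₂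
    refine ⟨?_, ?_⟩
    · show ‖γ₁ p.1‖ ^ 2 + ‖γ₂ p.2‖ ^ 2 = 1
      rw [γ₁.norm_map, γ₂.norm_map]; exact hpS
    · show ‖γ₁ p.1‖ < s₀
      rw [γ₁.norm_map]; exact hps
  have hdisjW : Disjoint {p : EuclideanSpace ℝ (Fin m) × EuclideanSpace ℝ (Fin n) |
      p ∈ sphereSet m n ∧ s₀ < ‖p.1‖} {p | p ∈ sphereSet m n ∧ ‖p.1‖ < s₀} := by
    rw [Set.disjoint_left]
    rintro p ⟨_, h1⟩ ⟨_, h2⟩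
    exact absurd h2 (lt_asymm h1)
  have hfr1 : frontier (Subtype.val ⁻¹' {p | p ∈ sphereSet m n ∧ s₀ < ‖p.1‖} :
      Set ↥(sphereSet m n)) = Subtype.val ⁻¹' {p | ‖p.1‖ = s₀} := by
    rw [hopen1.frontier_eq]
    ext x
    simp only [mem_diff, mem_preimage, mem_setOf_eq]
    have himg2 : (Subtype.val '' (Subtype.val ⁻¹' {p | p ∈ sphereSet m n ∧ s₀ < ‖p.1‖} :
        Set ↥(sphereSet m n))) = {p | p ∈ sphereSet m n ∧ s₀ < ‖p.1‖} := by
      rw [Subtype.image_preimage_coe]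
      exact inter_eq_self_of_subset_right hW₁sub
    constructor
    · rintro ⟨hcl, hnot⟩
      have h1 : (x : EuclideanSpace ℝ (Fin m) × EuclideanSpace ℝ (Fin n))
          ∈ closure {p | p ∈ sphereSet m n ∧ s₀ < ‖p.1‖} := by
        have := closure_subtype.mp hcl
        rwa [himg2] at this
      have h2 : s₀ ≤ ‖(x : EuclideanSpace ℝ (Fin m) × EuclideanSpace ℝ (Fin n)).1‖ :=
        closure_minimal (fun p (hp : p ∈ _) => hp.2.le)
          (isClosed_le continuous_const continuous_fst.norm) h1
      have h3 : ¬ s₀ < ‖(x : EuclideanSpace ℝ (Fin m) × EuclideanSpace ℝ (Fin n)).1‖ :=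
        fun h => hnot ⟨x.2, h⟩
      exact le_antisymm (not_lt.mp h3) h2
    · intro hx
      refine ⟨?_, fun h => absurd h.2 (by rw [hx]; exact lt_irrefl s₀)⟩
      rw [closure_subtype, himg2]
      exact (mem_closure_bands x.2 hx hs₀.1 hs₀.2).1
  have hfr2 : frontier (Subtype.val ⁻¹' {p | p ∈ sphereSet m n ∧ ‖p.1‖ < s₀} :
      Set ↥(sphereSet m n)) = Subtype.val ⁻¹' {p | ‖p.1‖ = s₀} := by
    rw [hopen2.frontier_eq]
    ext x
    simp only [mem_diff, mem_preimage, mem_setOf_eq]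
    have himg2 : (Subtype.val '' (Subtype.val ⁻¹' {p | p ∈ sphereSet m n ∧ ‖p.1‖ < s₀} :
        Set ↥(sphereSet m n))) = {p | p ∈ sphereSet m n ∧ ‖p.1‖ < s₀} := by
      rw [Subtype.image_preimage_coe]
      exact inter_eq_self_of_subset_right hW₂sub
    constructor
    · rintro ⟨hcl, hnot⟩
      have h1 : (x : EuclideanSpace ℝ (Fin m) × EuclideanSpace ℝ (Fin n))
          ∈ closure {p | p ∈ sphereSet m n ∧ ‖p.1‖ < s₀} := by
        have := closure_subtype.mp hcl
        rwa [himg2] at this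
      have h2 : ‖(x : EuclideanSpace ℝ (Fin m) × EuclideanSpace ℝ (Fin n)).1‖ ≤ s₀ :=
        closure_minimal (fun p (hp : p ∈ _) => hp.2.le)
          (isClosed_le continuous_fst.norm continuous_const) h1
      have h3 : ¬ ‖(x : EuclideanSpace ℝ (Fin m) × EuclideanSpace ℝ (Fin n)).1‖ < s₀ :=
        fun h => hnot ⟨x.2, h⟩
      exact le_antisymm h2 (not_lt.mp h3)
    · intro hx
      refine ⟨?_, fun h => absurd h.2 (by rw [hx]; exact lt_irrefl s₀)⟩
      rw [closure_subtype, himg2]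
      exact (mem_closure_bands x.2 hx hs₀.1 hs₀.2).2
  exact ⟨rfl, rfl, hopen1, hopen2, hconn1, hconn2, hinv1, hinv2, hdisjW, hfr1, hfr2⟩

/-- Lemma 5.2, describing a separation of the sphere into two
invariant connected open pieces. -/
theorem statement8 (m n : ℕ) (hm : 2 ≤ m) (hn : 2 ≤ n)
    (U₁ U₂ : Set (EuclideanSpace ℝ (Fin m) × EuclideanSpace ℝ (Fin n)))
    (hU₁S : U₁ ⊆ sphereSet m n) (hU₂S : U₂ ⊆ sphereSet m n)
    (hU₁conn : IsConnected U₁) (hU₂conn : IsConnected U₂)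
    (hU₁open : IsOpen (Subtype.val ⁻¹' U₁ : Set ↥(sphereSet m n)))
    (hU₂open : IsOpen (Subtype.val ⁻¹' U₂ : Set ↥(sphereSet m n)))
    (hU₁inv : isInvariantSet m n U₁) (hU₂inv : isInvariantSet m n U₂)
    (hdisj : Disjoint U₁ U₂)
    (hdense : sphereSet m n ⊆ closure (U₁ ∪ U₂)) :
    ∃ s₀ ∈ Ioo (0 : ℝ) 1,
      separationConclusion m n U₁ U₂ s₀ ∨ separationConclusion m n U₂ U₁ s₀ := by
  obtain ⟨p, hp⟩ := hU₁conn.nonempty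
  obtain ⟨q, hq⟩ := hU₂conn.nonempty
  have hne : ‖q.1‖ ≠ ‖p.1‖ := by
    intro h
    exact hdisj.ne_of_mem hp (orbit_lemma (hU₂S hq) (hU₁S hp) h hU₂inv hq) rfl
  rcases hne.lt_or_gt with h | h
  · obtain ⟨s₀, hs₀, hc⟩ := aux_main m n hm hn U₁ U₂ hU₁S hU₂S hU₁conn hU₂conn hU₁open
      hU₂open hU₁inv hU₂inv hdisj hdense ⟨p, hp, q, hq, h⟩
    exact ⟨s₀, hs₀, Or.inl hc⟩
  · obtain ⟨s₀, hs₀, hc⟩ := aux_main m n hm hn U₂ U₁ hU₂S hU₁S hU₂conn hU₁conn hU₂open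
      hU₁open hU₂inv hU₁inv hdisj.symm (by rwa [union_comm]) ⟨q, hq, p, hp, h⟩
    exact ⟨s₀, hs₀, Or.inr hc⟩
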